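/- Every contractible subshift of finite type with a fixed point is equiconnected. -/

import Mathlib

open Pointwise

variable {G : Type*} [Group G]

/-- The shift action of `G` on configurations `G → A`: `(g • x) h = x (g⁻¹ h)`. -/
def gshift {A : Type*} (g : G) (x : G → A) : G → A := fun h => x (g⁻¹ * h)

/-- A subshift: a closed, shift-invariant subset of `A^G` (product topology). -/
def IsSubshift {A : Type*} [TopologicalSpace A] (X : Set (G → A)) : Prop :=
  IsClosed X ∧ ∀ (g : G), ∀ x ∈ X, gshift g x ∈ X

/-- A morphism (block map) from `X` to `Y`: a continuous shift-commuting map. -/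
def IsMorphismOn {A B : Type*} [TopologicalSpace A] [TopologicalSpace B]
    (X : Set (G → A)) (Y : Set (G → B)) (f : (G → A) → (G → B)) : Prop :=
  ContinuousOn f X ∧ Set.MapsTo f X Y ∧
    ∀ (g : G), ∀ x ∈ X, f (gshift g x) = gshift g (f x)

/-- A contraction homotopy on `X`: a homotopy between the two projections
`X × X → X` (in curried form). -/
def IsContraction {A : Type*} [TopologicalSpace A] (X : Set (G → A))
    (h : (G → Bool) → (G → A) → (G → A) → (G → A)) : Prop :=
  ContinuousOn (fun p : (G → Bool) × (G → A) × (G → A) => h p.1 p.2.1 p.2.2)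
    (Set.univ ×ˢ X ×ˢ X) ∧
  (∀ t, ∀ x ∈ X, ∀ y ∈ X, h t x y ∈ X) ∧
  (∀ (g : G), ∀ t, ∀ x ∈ X, ∀ y ∈ X,
    h (gshift g t) (gshift g x) (gshift g y) = gshift g (h t x y)) ∧
  (∀ x ∈ X, ∀ y ∈ X, h (fun _ => false) x y = x) ∧
  (∀ x ∈ X, ∀ y ∈ X, h (fun _ => true) x y = y)

/-- A subshift is contractible if the two projections `X × X → X` are homotopic. -/
def IsContractible {A : Type*} [TopologicalSpace A] (X : Set (G → A)) : Prop :=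
  ∃ h, IsContraction X h

/-- The pattern `p` with finite domain `D` appears in the configuration `x`. -/
def Appears {A : Type*} (x : G → A) (D : Finset G) (p : G → A) : Prop :=
  ∃ g : G, ∀ d ∈ D, x (g * d) = p d

/-- A subshift of finite type: defined by finitely many forbidden finite patterns. -/
def IsSFT {A : Type*} (X : Set (G → A)) : Prop :=
  ∃ (n : ℕ) (D : Fin n → Finset G) (p : Fin n → (G → A)),
    X = {x | ∀ i, ¬ Appears x (D i) (p i)}

/-- `X` is equiconnected: the two projections `X × X → X` are homotopic via a
homotopy fixing the diagonal. -/
def IsEquiconnected {A : Type*} [TopologicalSpace A] (X : Set (G → A)) : Prop :=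
  ∃ h, IsContraction X h ∧ ∀ t, ∀ x ∈ X, h t x x = x

section AuxLemmas

lemma pi_cylinder {ι : Type*} {B : ι → Type*} [∀ i, TopologicalSpace (B i)]
    [∀ i, DiscreteTopology (B i)] {f : ∀ i, B i} {U : Set (∀ i, B i)} (hU : U ∈ nhds f) :
    ∃ I : Finset ι, {g : ∀ i, B i | ∀ i ∈ I, g i = f i} ⊆ U := by
  classical
  rw [nhds_pi] at hU
  obtain ⟨I, hIfin, t, ht, hsub⟩ := Filter.mem_pi.mp hU
  refine ⟨hIfin.toFinset, fun g hg => hsub ?_⟩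
  intro i hi
  have hgi : g i = f i := hg i (hIfin.mem_toFinset.mpr hi)
  rw [hgi]
  exact mem_of_mem_nhds (ht i)

lemma prod3_cylinder {G A : Type*} [TopologicalSpace A] [DiscreteTopology A]
    {u : (G → Bool) × (G → A) × (G → A)} {U : Set ((G → Bool) × (G → A) × (G → A))}
    (hU : U ∈ nhds u) :
    ∃ I : Finset G,
      {v : (G → Bool) × (G → A) × (G → A) |
        ∀ k ∈ I, v.1 k = u.1 k ∧ v.2.1 k = u.2.1 k ∧ v.2.2 k = u.2.2 k} ⊆ U := by
  classical
  obtain ⟨t, x, y⟩ := u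
  rw [nhds_prod_eq, nhds_prod_eq] at hU
  obtain ⟨U1, hU1, V, hV, hUV⟩ := Filter.mem_prod_iff.mp hU
  obtain ⟨U2, hU2, U3, hU3, hV23⟩ := Filter.mem_prod_iff.mp hV
  obtain ⟨I1, hI1⟩ := pi_cylinder hU1
  obtain ⟨I2, hI2⟩ := pi_cylinder hU2
  obtain ⟨I3, hI3⟩ := pi_cylinder hU3
  refine ⟨I1 ∪ I2 ∪ I3, fun v hv => ?_⟩
  refine hUV (Set.mem_prod.mpr ⟨?_, hV23 (Set.mem_prod.mpr ⟨?_, ?_⟩)⟩)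
  · exact hI1 fun i hi => (hv i (by simp [Finset.mem_union, hi])).1
  · exact hI2 fun i hi => (hv i (by simp [Finset.mem_union, hi])).2.1
  · exact hI3 fun i hi => (hv i (by simp [Finset.mem_union, hi])).2.2

lemma loc_exists {G A : Type*} [TopologicalSpace A] [DiscreteTopology A] [Finite A]
    {X : Set (G → A)} (hXc : IsClosed X)
    (φ : (G → Bool) × (G → A) × (G → A) → A)
    (hφ : ContinuousOn φ (Set.univ ×ˢ X ×ˢ X)) :
    ∃ F : Finset G, ∀ t x y t' x' y' : G → _, x ∈ X → y ∈ X → x' ∈ X → y' ∈ X →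
      (∀ k ∈ F, t k = t' k) → (∀ k ∈ F, x k = x' k) → (∀ k ∈ F, y k = y' k) →
      φ (t, x, y) = φ (t', x', y') := by
  classical
  set K : Set ((G → Bool) × (G → A) × (G → A)) := Set.univ ×ˢ X ×ˢ X with hK
  have hKcl : IsClosed K := isClosed_univ.prod (hXc.prod hXc)
  have hKcp : IsCompact K := hKcl.isCompact
  have key : ∀ u : K, ∃ I : Finset G,
      ∀ v ∈ K, (∀ k ∈ I, v.1 k = (u : (G → Bool) × (G → A) × (G → A)).1 k ∧
        v.2.1 k = (u : (G → Bool) × (G → A) × (G → A)).2.1 k ∧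
        v.2.2 k = (u : (G → Bool) × (G → A) × (G → A)).2.2 k) → φ v = φ u := by
    rintro ⟨u, hu⟩
    have hcw : ContinuousWithinAt φ K u := hφ u hu
    have hpre : φ ⁻¹' {φ u} ∈ nhdsWithin u K :=
      hcw ((isOpen_discrete ({φ u} : Set A)).mem_nhds rfl)
    obtain ⟨U, hUo, hUu, hUsub⟩ := mem_nhdsWithin.mp hpre
    obtain ⟨I, hI⟩ := prod3_cylinder (hUo.mem_nhds hUu)
    exact ⟨I, fun v hv hvagree => hUsub ⟨hI hvagree, hv⟩⟩
  choose I hI using key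
  set V : K → Set ((G → Bool) × (G → A) × (G → A)) := fun u =>
    {v | ∀ k ∈ I u, v.1 k = (u : (G → Bool) × (G → A) × (G → A)).1 k ∧
      v.2.1 k = (u : (G → Bool) × (G → A) × (G → A)).2.1 k ∧
      v.2.2 k = (u : (G → Bool) × (G → A) × (G → A)).2.2 k} with hV
  have hopen : ∀ u : K, IsOpen (V u) := by
    intro u
    have hrw : V u = ⋂ k ∈ I u,
        ({v : (G → Bool) × (G → A) × (G → A) | v.1 k = (u : (G → Bool) × (G → A) × (G → A)).1 k} ∩
         ({v | v.2.1 k = (u : (G → Bool) × (G → A) × (G → A)).2.1 k} ∩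
          {v | v.2.2 k = (u : (G → Bool) × (G → A) × (G → A)).2.2 k})) := by
      ext v
      simp [hV, Set.mem_iInter]
    rw [hrw]
    refine isOpen_biInter_finset fun k _ => ?_
    refine IsOpen.inter ?_ (IsOpen.inter ?_ ?_)
    · show IsOpen ((fun v : (G → Bool) × (G → A) × (G → A) => v.1 k) ⁻¹'
        {(u : (G → Bool) × (G → A) × (G → A)).1 k})
      exact IsOpen.preimage (by fun_prop) (isOpen_discrete _)
    · show IsOpen ((fun v : (G → Bool) × (G → A) × (G → A) => v.2.1 k) ⁻¹'
        {(u : (G → Bool) × (G → A) × (G → A)).2.1 k})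
      exact IsOpen.preimage (by fun_prop) (isOpen_discrete _)
    · show IsOpen ((fun v : (G → Bool) × (G → A) × (G → A) => v.2.2 k) ⁻¹'
        {(u : (G → Bool) × (G → A) × (G → A)).2.2 k})
      exact IsOpen.preimage (by fun_prop) (isOpen_discrete _)
  have hcover : K ⊆ ⋃ u : K, V u := fun w hw =>
    Set.mem_iUnion.mpr ⟨⟨w, hw⟩, fun k _ => ⟨rfl, rfl, rfl⟩⟩
  obtain ⟨s, hs⟩ := hKcp.elim_finite_subcover V hopen hcover
  refine ⟨s.sup I, ?_⟩
  intro t x y t' x' y' hx hy hx' hy' hat hax hay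
  have humem : ((t, x, y) : (G → Bool) × (G → A) × (G → A)) ∈ K :=
    ⟨Set.mem_univ _, hx, hy⟩
  have hvmem : ((t', x', y') : (G → Bool) × (G → A) × (G → A)) ∈ K :=
    ⟨Set.mem_univ _, hx', hy'⟩
  obtain ⟨u₀, hu₀s, hu₀⟩ := Set.mem_iUnion₂.mp (hs humem)
  have hsubF : I u₀ ⊆ s.sup I := Finset.le_sup hu₀s
  have h1 : φ (t, x, y) = φ u₀ := hI u₀ _ humem hu₀
  have h2 : φ (t', x', y') = φ u₀ := by
    refine hI u₀ _ hvmem fun k hk => ?_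
    obtain ⟨e1, e2, e3⟩ := hu₀ k hk
    exact ⟨(hat k (hsubF hk)).symm.trans e1, (hax k (hsubF hk)).symm.trans e2,
      (hay k (hsubF hk)).symm.trans e3⟩
  rw [h1, h2]

lemma extend_lemma {G : Type*} [Group G] {A : Type*} [TopologicalSpace A] [DiscreteTopology A]
    [Finite A] {X : Set (G → A)} {n : ℕ} {D : Fin n → Finset G} {p : Fin n → G → A}
    (hXeq : X = {x | ∀ i, ¬ Appears x (D i) (p i)}) (E : Finset G) :
    ∃ C : Finset G, ∀ x : G → A, (∀ k ∈ C, ¬ ∃ i, ∀ d ∈ D i, x (k * d) = p i d) →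
      ∃ x' ∈ X, ∀ m ∈ E, x' m = x m := by
  classical
  by_contra hcon
  push_neg at hcon
  set T : Finset G → Set (G → A) := fun C =>
    {x | (∀ k ∈ C, ¬ ∃ i, ∀ d ∈ D i, x (k * d) = p i d) ∧
      ¬ ∃ x' ∈ X, ∀ m ∈ E, x' m = x m} with hT
  have hne : ∀ C, (T C).Nonempty := by
    intro C
    obtain ⟨x, h1, h2⟩ := hcon C
    refine ⟨x, fun k hk => ?_, ?_⟩
    · push_neg
      exact h1 k hk
    · push_neg
      exact h2
  have hclosed : ∀ C, IsClosed (T C) := by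
    intro C
    have hrw : T C = (⋂ k ∈ C, (⋃ i, ⋂ d ∈ D i, {x : G → A | x (k * d) = p i d})ᶜ) ∩
        (⋃ x' ∈ X, ⋂ m ∈ E, {x : G → A | x' m = x m})ᶜ := by
      ext x
      simp [hT]
    rw [hrw]
    refine IsClosed.inter (isClosed_biInter fun k _ => IsOpen.isClosed_compl ?_)
      (IsOpen.isClosed_compl ?_)
    · refine isOpen_iUnion fun i => isOpen_biInter_finset fun d _ => ?_
      show IsOpen ((fun x : G → A => x (k * d)) ⁻¹' {p i d})
      exact IsOpen.preimage (continuous_apply (k * d)) (isOpen_discrete _)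
    · refine isOpen_biUnion fun x' _ => isOpen_biInter_finset fun m _ => ?_
      show IsOpen ((fun x : G → A => x m) ⁻¹' {b | x' m = b})
      exact IsOpen.preimage (continuous_apply m) (isOpen_discrete _)
  have hcompact : ∀ C, IsCompact (T C) := fun C => (hclosed C).isCompact
  have hdir : Directed (fun a b => a ⊇ b) T := by
    intro C C'
    exact ⟨C ∪ C', fun x hx => ⟨fun k hk => hx.1 k (Finset.mem_union_left _ hk), hx.2⟩,
      fun x hx => ⟨fun k hk => hx.1 k (Finset.mem_union_right _ hk), hx.2⟩⟩
  obtain ⟨x, hx⟩ :=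
    IsCompact.nonempty_iInter_of_directed_nonempty_isCompact_isClosed T hdir hne hcompact hclosed
  have hxX : x ∈ X := by
    rw [hXeq]
    intro i hi
    obtain ⟨g, hg⟩ := hi
    exact (Set.mem_iInter.mp hx {g}).1 g (Finset.mem_singleton_self g) ⟨i, hg⟩
  exact (Set.mem_iInter.mp hx ∅).2 ⟨x, hxX, fun m _ => rfl⟩

end AuxLemmas

/-- Every contractible subshift of finite type with a fixed point is equiconnected. -/
theorem contractible_sft_fixed_point_equiconnected {A : Type*}
    [TopologicalSpace A] [DiscreteTopology A] [Finite A]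
    (X : Set (G → A)) (hX : IsSubshift X) (hSFT : IsSFT X)
    (a : A) (ha : (fun _ : G => a) ∈ X) (hc : IsContractible X) :
    IsEquiconnected X := by
  classical
  obtain ⟨h, hcont, hmem, hequi, h0, h1⟩ := hc
  obtain ⟨n, D, p, hXeq⟩ := hSFT
  set abar : G → A := fun _ => a with habar
  have hmemXiff : ∀ z : G → A, z ∈ X ↔ ∀ i, ¬ Appears z (D i) (p i) := by
    intro z
    rw [hXeq]
    exact Iff.rfl
  have hXiff : ∀ x : G → A, x ∈ X → ∀ k : G, ¬ ∃ i, ∀ d ∈ D i, x (k * d) = p i d := by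
    intro x hx k hk
    obtain ⟨i, hi⟩ := hk
    exact (hmemXiff x).mp hx i ⟨k, hi⟩
  -- W : union of the supports of the forbidden patterns
  set W : Finset G := insert 1 (Finset.univ.sup D) with hW
  have hDW : ∀ i, D i ⊆ W := fun i =>
    Finset.Subset.trans (Finset.le_sup (Finset.mem_univ i)) (Finset.subset_insert _ _)
  -- the locality window of the contraction
  obtain ⟨F₀, hF₀⟩ := loc_exists hX.1 (fun u => h u.1 u.2.1 u.2.2 1)
    ((continuous_apply (1 : G)).comp_continuousOn hcont)
  set F : Finset G := insert 1 F₀ with hF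
  have h1F : (1 : G) ∈ F := Finset.mem_insert_self _ _
  have hF₀F : F₀ ⊆ F := Finset.subset_insert _ _
  -- locality of h at any point g
  have loc : ∀ (g : G) (t x y t' x' y' : G → _), x ∈ X → y ∈ X → x' ∈ X → y' ∈ X →
      (∀ k ∈ F, t (g * k) = t' (g * k)) → (∀ k ∈ F, x (g * k) = x' (g * k)) →
      (∀ k ∈ F, y (g * k) = y' (g * k)) → h t x y g = h t' x' y' g := by
    intro g t x y t' x' y' hx hy hx' hy' ht hxx hyy
    have e1 : h t x y g = h (gshift g⁻¹ t) (gshift g⁻¹ x) (gshift g⁻¹ y) 1 := by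
      rw [hequi g⁻¹ t x hx y hy]
      simp [gshift]
    have e2 : h t' x' y' g = h (gshift g⁻¹ t') (gshift g⁻¹ x') (gshift g⁻¹ y') 1 := by
      rw [hequi g⁻¹ t' x' hx' y' hy']
      simp [gshift]
    rw [e1, e2]
    exact hF₀ _ _ _ _ _ _ (hX.2 g⁻¹ x hx) (hX.2 g⁻¹ y hy) (hX.2 g⁻¹ x' hx') (hX.2 g⁻¹ y' hy')
      (fun k hk => by simpa [gshift] using ht k (hF₀F hk))
      (fun k hk => by simpa [gshift] using hxx k (hF₀F hk))
      (fun k hk => by simpa [gshift] using hyy k (hF₀F hk))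
  -- bounded extendability
  obtain ⟨C, hC⟩ := extend_lemma hXeq (W * F)
  -- translated version
  have hCg : ∀ (g : G) (x : G → A), (∀ k ∈ C, ¬ ∃ i, ∀ d ∈ D i, x (g * (k * d)) = p i d) →
      ∃ x' ∈ X, ∀ m ∈ W * F, x' (g * m) = x (g * m) := by
    intro g x hx
    obtain ⟨x', hx'X, hx'⟩ := hC (gshift g⁻¹ x) (by
      intro k hk hcontra
      obtain ⟨i, hi⟩ := hcontra
      exact hx k hk ⟨i, fun d hd => by simpa [gshift] using hi d hd⟩)
    refine ⟨gshift g x', hX.2 g x' hx'X, fun m hm => ?_⟩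
    have := hx' m hm
    simp only [gshift] at this ⊢
    simpa using this
  set N : Finset G := (W * F)⁻¹ * C with hN
  -- the "defect nearby" indicator
  set τ : (G → A) → G → Bool :=
    fun x g => decide (∃ k ∈ N, ∃ i, ∀ d ∈ D i, x (g * k * d) = p i d) with hτ
  -- the retraction
  set r : (G → A) → G → A := fun x g =>
    if hg : ∃ x', x' ∈ X ∧ ∀ k ∈ F, x' (g * k) = x (g * k)
    then h (τ x) hg.choose abar g else a with hr
  -- key evaluation lemma for r
  have rspec : ∀ (x : G → A) (g : G) (x' : G → A), x' ∈ X →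
      (∀ k ∈ F, x' (g * k) = x (g * k)) → r x g = h (τ x) x' abar g := by
    intro x g x' hx' hag
    have hg : ∃ x'', x'' ∈ X ∧ ∀ k ∈ F, x'' (g * k) = x (g * k) := ⟨x', hx', hag⟩
    simp only [hr]
    rw [dif_pos hg]
    exact loc g (τ x) hg.choose abar (τ x) x' abar hg.choose_spec.1 ha hx' ha
      (fun _ _ => rfl)
      (fun k hk => (hg.choose_spec.2 k hk).trans (hag k hk).symm)
      (fun _ _ => rfl)
  -- r maps everything into X
  have rX : ∀ x : G → A, r x ∈ X := by
    intro x
    rw [hmemXiff]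
    intro i hi
    obtain ⟨g, hg⟩ := hi
    by_cases hcase : ∀ m ∈ W * F, τ x (g * m) = true
    · -- deep inside the defect region: r x is the fixed point
      have hAd : ∀ d ∈ W, r x (g * d) = a := by
        intro d hd
        by_cases hgd : ∃ x', x' ∈ X ∧ ∀ k ∈ F, x' (g * d * k) = x (g * d * k)
        · obtain ⟨x', hx'X, hag⟩ := hgd
          rw [rspec x (g * d) x' hx'X hag]
          have e : h (τ x) x' abar (g * d) = h (fun _ => true) x' abar (g * d) := by
            refine loc (g * d) (τ x) x' abar (fun _ => true) x' abar hx'X ha hx'X ha ?_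
              (fun _ _ => rfl) (fun _ _ => rfl)
            intro k hk
            have hmem : d * k ∈ W * F := Finset.mul_mem_mul hd hk
            have := hcase (d * k) hmem
            rw [mul_assoc]
            exact this
          rw [e, h1 x' hx'X abar ha]
        · simp only [hr]
          rw [dif_neg hgd]
      have happ : Appears abar (D i) (p i) := by
        refine ⟨g, fun d hd => ?_⟩
        have := hg d hd
        rw [hAd d (hDW i hd)] at this
        exact this
      exact (hmemXiff abar).mp ha i happ
    · -- near the boundary: x is locally extendable, and r x locally looks like a point of X
      push_neg at hcase
      obtain ⟨m₀, hm₀, hm₀f⟩ := hcase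
      have hfalse : ¬ ∃ k ∈ N, ∃ i, ∀ d ∈ D i, x (g * m₀ * k * d) = p i d := by
        simpa [hτ] using hm₀f
      have hnd : ∀ k ∈ C, ¬ ∃ i, ∀ d ∈ D i, x (g * (k * d)) = p i d := by
        intro k hk hcontra
        obtain ⟨i', hi'⟩ := hcontra
        have hk' : m₀⁻¹ * k ∈ N := Finset.mul_mem_mul (Finset.inv_mem_inv hm₀) hk
        refine hfalse ⟨m₀⁻¹ * k, hk', i', fun d hd => ?_⟩
        have : g * m₀ * (m₀⁻¹ * k) * d = g * (k * d) := by
          group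
        rw [this]
        exact hi' d hd
      obtain ⟨x', hx'X, hx'ag⟩ := hCg g x hnd
      have hBd : ∀ d ∈ W, r x (g * d) = h (τ x) x' abar (g * d) := by
        intro d hd
        refine rspec x (g * d) x' hx'X fun k hk => ?_
        have := hx'ag (d * k) (Finset.mul_mem_mul hd hk)
        simpa [mul_assoc] using this
      have hhX : h (τ x) x' abar ∈ X := hmem (τ x) x' hx'X abar ha
      have happ : Appears (h (τ x) x' abar) (D i) (p i) := by
        refine ⟨g, fun d hd => ?_⟩
        have := hg d hd
        rw [hBd d (hDW i hd)] at this
        exact this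
      exact (hmemXiff _).mp hhX i happ
  -- r is the identity on X
  have rid : ∀ x ∈ X, r x = x := by
    intro x hx
    funext g
    have hτ0 : τ x = fun _ => false := by
      funext g'
      have hno : ¬ ∃ k ∈ N, ∃ i, ∀ d ∈ D i, x (g' * k * d) = p i d := by
        rintro ⟨k, hk, i, hi⟩
        exact hXiff x hx (g' * k) ⟨i, fun d hd => hi d hd⟩
      simp only [hτ]
      simpa using hno
    rw [rspec x g x hx fun _ _ => rfl, hτ0, h0 x hx abar ha]
  -- τ is equivariant
  have τequi : ∀ (g : G) (x : G → A), τ (gshift g x) = gshift g (τ x) := by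
    intro g x
    funext k
    simp only [hτ, gshift, mul_assoc]
    exact decide_eq_decide.mpr Iff.rfl
  -- r is equivariant
  have requi : ∀ (g : G) (x : G → A), r (gshift g x) = gshift g (r x) := by
    intro g x
    funext k
    show r (gshift g x) k = r x (g⁻¹ * k)
    by_cases hcond : ∃ x', x' ∈ X ∧ ∀ j ∈ F, x' (g⁻¹ * k * j) = x (g⁻¹ * k * j)
    · obtain ⟨x', hx'X, hx'⟩ := hcond
      have hL : r (gshift g x) k = h (τ (gshift g x)) (gshift g x') abar k := by
        refine rspec (gshift g x) k (gshift g x') (hX.2 g x' hx'X) fun j hj => ?_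
        simp only [gshift]
        have := hx' j hj
        simpa [mul_assoc] using this
      have hR : r x (g⁻¹ * k) = h (τ x) x' abar (g⁻¹ * k) := rspec x (g⁻¹ * k) x' hx'X hx'
      rw [hL, hR, τequi g x]
      have : h (gshift g (τ x)) (gshift g x') abar = gshift g (h (τ x) x' abar) := by
        have habar : gshift g abar = abar := rfl
        rw [← habar]
        exact hequi g (τ x) x' hx'X abar ha
      rw [this]
      rfl
    · have hcond' : ¬ ∃ x', x' ∈ X ∧ ∀ j ∈ F, x' (k * j) = gshift g x (k * j) := by
        rintro ⟨x', hx'X, hx'⟩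
        refine hcond ⟨gshift g⁻¹ x', hX.2 g⁻¹ x' hx'X, fun j hj => ?_⟩
        have := hx' j hj
        simp only [gshift] at this ⊢
        simpa [mul_assoc] using this
      simp only [hr]
      rw [dif_neg hcond', dif_neg hcond]
  -- r is continuous
  have rcont : Continuous r := by
    apply continuous_pi
    intro g
    apply IsLocallyConstant.continuous
    rw [IsLocallyConstant.iff_exists_open]
    intro x
    set M : Finset G := F ∪ F * N * W with hM
    refine ⟨{y : G → A | ∀ m ∈ M, y (g * m) = x (g * m)}, ?_, fun m _ => rfl, ?_⟩
    · have hrw : {y : G → A | ∀ m ∈ M, y (g * m) = x (g * m)} =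
          ⋂ m ∈ M, {y : G → A | y (g * m) = x (g * m)} := by
        ext y
        simp
      rw [hrw]
      refine isOpen_biInter_finset fun m _ => ?_
      show IsOpen ((fun y : G → A => y (g * m)) ⁻¹' {x (g * m)})
      exact IsOpen.preimage (continuous_apply (g * m)) (isOpen_discrete _)
    · intro y hy
      have hFM : F ⊆ M := Finset.subset_union_left
      have hagF : ∀ k ∈ F, y (g * k) = x (g * k) := fun k hk => hy k (hFM hk)
      have hτag : ∀ k ∈ F, τ y (g * k) = τ x (g * k) := by
        intro k hk
        simp only [hτ]
        apply decide_eq_decide.mpr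
        constructor
        · rintro ⟨m, hm, i, hi⟩
          refine ⟨m, hm, i, fun d hd => ?_⟩
          have hmem : k * m * d ∈ M := Finset.mem_union_right _
            (Finset.mul_mem_mul (Finset.mul_mem_mul hk hm) (hDW i hd))
          have h1' := hy (k * m * d) hmem
          have h2' := hi d hd
          simp only [← mul_assoc] at h1'
          rw [← h1']
          simpa [mul_assoc] using h2'
        · rintro ⟨m, hm, i, hi⟩
          refine ⟨m, hm, i, fun d hd => ?_⟩
          have hmem : k * m * d ∈ M := Finset.mem_union_right _
            (Finset.mul_mem_mul (Finset.mul_mem_mul hk hm) (hDW i hd))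
          have h1' := hy (k * m * d) hmem
          have h2' := hi d hd
          simp only [← mul_assoc] at h1'
          rw [h1']
          simpa [mul_assoc] using h2'
      by_cases hcond : ∃ x', x' ∈ X ∧ ∀ k ∈ F, x' (g * k) = x (g * k)
      · obtain ⟨x', hx'X, hx'⟩ := hcond
        have hLy : r y g = h (τ y) x' abar g :=
          rspec y g x' hx'X fun k hk => (hx' k hk).trans (hagF k hk).symm
        have hLx : r x g = h (τ x) x' abar g := rspec x g x' hx'X hx'
        rw [hLy, hLx]
        exact loc g (τ y) x' abar (τ x) x' abar hx'X ha hx'X ha hτag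
          (fun _ _ => rfl) (fun _ _ => rfl)
      · have hcondy : ¬ ∃ x', x' ∈ X ∧ ∀ k ∈ F, x' (g * k) = y (g * k) := by
          rintro ⟨x', hx'X, hx'⟩
          exact hcond ⟨x', hx'X, fun k hk => (hx' k hk).trans (hagF k hk)⟩
        simp only [hr]
        rw [dif_neg hcondy, dif_neg hcond]
  -- the switch map
  set sw : (G → Bool) → (G → A) → (G → A) → (G → A) :=
    fun t x y g => cond (t g) (y g) (x g) with hsw
  refine ⟨fun t x y => r (sw t x y), ⟨?_, ?_, ?_, ?_, ?_⟩, ?_⟩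
  · -- continuity
    have swc : Continuous (fun q : (G → Bool) × (G → A) × (G → A) => sw q.1 q.2.1 q.2.2) := by
      apply continuous_pi
      intro g
      have e : Continuous (fun q : (G → Bool) × (G → A) × (G → A) =>
          ((q.1 g, q.2.1 g, q.2.2 g) : Bool × A × A)) := by
        fun_prop
      exact (continuous_of_discreteTopology
        (f := fun b : Bool × A × A => cond b.1 b.2.2 b.2.1)).comp e
    exact (rcont.comp swc).continuousOn
  · intro t x _ y _
    exact rX _
  · intro g t x _ y _
    show r (sw (gshift g t) (gshift g x) (gshift g y)) = gshift g (r (sw t x y))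
    have hswe : sw (gshift g t) (gshift g x) (gshift g y) = gshift g (sw t x y) := rfl
    rw [hswe, requi]
  · intro x hx y _
    show r (sw (fun _ => false) x y) = x
    have hswe : sw (fun _ => false) x y = x := rfl
    rw [hswe]
    exact rid x hx
  · intro x _ y hy
    show r (sw (fun _ => true) x y) = y
    have hswe : sw (fun _ => true) x y = y := rfl
    rw [hswe]
    exact rid y hy
  · intro t x hx
    show r (sw t x x) = x
    have hswe : sw t x x = x := by
      funext g
      simp only [hsw, Bool.cond_self]
    rw [hswe]
    exact rid x hx
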